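/- Let A be an abelian category of finite length, i.e. every object of A admits a finite composition series. Then every stability function Z : K(A) → ℂ on A has the Harder–Narasimhan property. -/

import Mathlib

/-!
Stability functions on an abelian category (Bridgeland / Rudakov).  A group
homomorphism `K(A) → ℂ` is encoded as an isomorphism-invariant function on objects
which is additive on short exact sequences.
-/

open CategoryTheory CategoryTheory.Limits

universe v u

variable (A : Type u) [Category.{v} A] [Abelian A]

/-- A stability function on the abelian category `A`: a group homomorphism
`Z : K(A) → ℂ` such that every nonzero `E` satisfies `Z(E) = m·exp(iπφ)` with `m > 0`
and `0 < φ ≤ 1`. -/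
def IsStabilityFunction (Z : A → ℂ) : Prop :=
  (∀ ⦃X Y : A⦄, (X ≅ Y) → Z X = Z Y) ∧
  (∀ S : ShortComplex A, S.ShortExact → Z S.X₂ = Z S.X₁ + Z S.X₃) ∧
  (∀ E : A, ¬ IsZero E → ∃ m φ : ℝ, 0 < m ∧ 0 < φ ∧ φ ≤ 1 ∧
    Z E = (m : ℂ) * Complex.exp ((Real.pi * φ : ℝ) * Complex.I))

/-- The phase `φ(E) ∈ (0,1]` of an object with `Z(E) = m·exp(iπφ(E))`, recovered as
`(1/π)·arg Z(E)`. -/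
noncomputable def phaseOf (z : ℂ) : ℝ := z.arg / Real.pi

/-- A nonzero object `E` is `Z`-semistable if every nonzero subobject `A' ⊆ E` satisfies
`φ(A') ≤ φ(E)`. -/
def ZSemistable (Z : A → ℂ) (E : A) : Prop :=
  ¬ IsZero E ∧ ∀ P : Subobject E, ¬ IsZero (P : A) →
    phaseOf (Z (P : A)) ≤ phaseOf (Z E)

/-- `A` is a finite length abelian category: every object admits a finite composition
series, i.e. a finite chain of subobjects `⊥ = c₀ ≤ c₁ ≤ ⋯ ≤ c_n = ⊤` with simple
successive quotients. -/
def FiniteLengthCategory : Prop :=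
  ∀ X : A, ∃ (n : ℕ) (c : Fin (n + 1) → Subobject X),
    c 0 = ⊥ ∧ c (Fin.last n) = ⊤ ∧
    ∃ hle : ∀ j : Fin n, c j.castSucc ≤ c j.succ,
      ∀ j : Fin n, c j.castSucc ≠ c j.succ ∧
        Simple (cokernel (Subobject.ofLE _ _ (hle j)))

/-- `E` admits a Harder–Narasimhan filtration with respect to `Z`: a finite chain of
subobjects `⊥ = c₀ ⊆ c₁ ⊆ ⋯ ⊆ c_n = ⊤` of `E` whose successive quotients
`F_j = c_j/c_{j−1}` are `Z`-semistable with `φ(F₁) > φ(F₂) > ⋯ > φ(F_n)`. -/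
def HasHNFiltration (Z : A → ℂ) (E : A) : Prop :=
  ∃ (n : ℕ) (c : Fin (n + 1) → Subobject E),
    c 0 = ⊥ ∧ c (Fin.last n) = ⊤ ∧
    ∃ hle : ∀ j : Fin n, c j.castSucc ≤ c j.succ,
      (∀ j : Fin n, ZSemistable A Z (cokernel (Subobject.ofLE _ _ (hle j)))) ∧
      ∀ ⦃i j : Fin n⦄, i < j →
        phaseOf (Z (cokernel (Subobject.ofLE _ _ (hle j)))) <
          phaseOf (Z (cokernel (Subobject.ofLE _ _ (hle i))))


/-! ### Auxiliary material -/

section ArgLemmas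
open Complex

/-- `z` lies in the upper half plane slit along the nonnegative reals: `arg z ∈ (0, π]`. -/
def ArgOk (z : ℂ) : Prop := 0 < z.arg ∧ z.arg ≤ Real.pi

lemma ArgOk.ne_zero {z : ℂ} (h : ArgOk z) : z ≠ 0 := by
  rintro rfl
  have := h.1
  rw [Complex.arg_zero] at this
  exact lt_irrefl _ this

lemma argOk_iff {z : ℂ} : ArgOk z ↔ 0 < z.im ∨ (z.im = 0 ∧ z.re < 0) := by
  constructor
  · rintro ⟨h1, h2⟩
    have him : 0 ≤ z.im := arg_nonneg_iff.mp h1.le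
    rcases him.lt_or_eq with h | h
    · exact Or.inl h
    · refine Or.inr ⟨h.symm, ?_⟩
      rcases h2.lt_or_eq with hlt | heq
      · exfalso
        have hs : 0 < Real.sin z.arg := Real.sin_pos_of_pos_of_lt_pi h1 hlt
        rw [Complex.sin_arg, ← h] at hs
        simp at hs
      · exact (Complex.arg_eq_pi_iff.mp heq).1
  · rintro (h | ⟨h0, hneg⟩)
    · refine ⟨lt_of_le_of_ne (arg_nonneg_iff.mpr h.le) ?_, Complex.arg_le_pi z⟩
      intro h0
      have := Complex.arg_eq_zero_iff.mp h0.symm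
      exact absurd this.2 (by rw [this.2] at h; exact fun _ => lt_irrefl _ h)
    · have := Complex.arg_eq_pi_iff.mpr ⟨hneg, h0⟩
      exact ⟨by rw [this]; exact Real.pi_pos, by rw [this]⟩

lemma ArgOk.add {a b : ℂ} (ha : ArgOk a) (hb : ArgOk b) : ArgOk (a + b) := by
  rw [argOk_iff] at ha hb ⊢
  rcases ha with h | ⟨h0, hr⟩ <;> rcases hb with h' | ⟨h0', hr'⟩
  · exact Or.inl (by simp; positivity)
  · exact Or.inl (by simp [h0']; linarith)
  · exact Or.inl (by simp [h0]; linarith)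
  · exact Or.inr ⟨by simp [h0, h0'], by simp; linarith⟩

lemma arg_add_eq_of_arg_eq {a b : ℂ} (ha : ArgOk a) (hb : ArgOk b) (h : a.arg = b.arg) :
    (a + b).arg = a.arg := by
  have hane : ‖a‖ ≠ 0 := norm_ne_zero_iff.mpr ha.ne_zero
  have key : (‖b‖ : ℂ) * a = b * (‖a‖ : ℂ) := by
    conv_lhs => rw [← Complex.norm_mul_exp_arg_mul_I a]
    conv_rhs => rw [← Complex.norm_mul_exp_arg_mul_I b, ← h]
    ring
  have hb' : ((‖b‖ / ‖a‖ : ℝ) : ℂ) * a = b := by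
    push_cast
    rw [div_mul_eq_mul_div, key, mul_div_assoc, div_self (by exact_mod_cast hane), mul_one]
  rw [← hb']
  have e : a + ((‖b‖ / ‖a‖ : ℝ) : ℂ) * a
      = ((1 + ‖b‖ / ‖a‖ : ℝ) : ℂ) * a := by push_cast; ring
  rw [e, Complex.arg_real_mul]
  have : 0 ≤ ‖b‖ / ‖a‖ := by positivity
  linarith

lemma cross_eq (a b : ℂ) :
    ((starRingEnd ℂ) a * b).im = ‖a‖ * ‖b‖ * Real.sin (b.arg - a.arg) := by
  conv_lhs => rw [← Complex.norm_mul_exp_arg_mul_I a, ← Complex.norm_mul_exp_arg_mul_I b]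
  rw [map_mul, ← Complex.exp_conj]
  have h1 : (starRingEnd ℂ) (↑a.arg * I) = ↑(-a.arg) * I := by
    rw [map_mul, Complex.conj_ofReal, Complex.conj_I]
    push_cast; ring
  rw [h1, Complex.conj_ofReal]
  have h2 : (‖a‖ : ℂ) * Complex.exp (↑(-a.arg) * I) * ((‖b‖ : ℂ) *
      Complex.exp (↑b.arg * I)) = ((‖a‖ * ‖b‖ : ℝ) : ℂ) *
      Complex.exp (↑(b.arg - a.arg) * I) := by
    rw [mul_mul_mul_comm, ← Complex.exp_add,
      show (↑(-a.arg) * I + ↑b.arg * I : ℂ) = ↑(b.arg - a.arg) * I by push_cast; ring,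
      Complex.ofReal_mul]
  rw [h2, Complex.mul_im, Complex.ofReal_re, Complex.ofReal_im,
    Complex.exp_ofReal_mul_I_im]
  ring

lemma cross_im (a b : ℂ) : ((starRingEnd ℂ) a * b).im = a.re * b.im - a.im * b.re := by
  simp [Complex.mul_im]; ring

lemma arg_add_lt_of_arg_lt {a b : ℂ} (ha : ArgOk a) (hb : ArgOk b) (h : a.arg < b.arg) :
    a.arg < (a + b).arg := by
  have hab : ArgOk (a + b) := ha.add hb
  have habs : (0:ℝ) < ‖a‖ := norm_pos_iff.mpr ha.ne_zero
  have habs' : (0:ℝ) < ‖a+b‖ := norm_pos_iff.mpr hab.ne_zero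
  have h1 : 0 < Real.sin (b.arg - a.arg) :=
    Real.sin_pos_of_pos_of_lt_pi (by linarith) (by have := ha.1; have := hb.2; linarith)
  have h2 : 0 < ((starRingEnd ℂ) a * b).im := by
    rw [cross_eq]
    have := norm_pos_iff.mpr hb.ne_zero
    positivity
  have h3 : 0 < ((starRingEnd ℂ) a * (a + b)).im := by
    rw [cross_im] at h2 ⊢
    simp only [Complex.add_re, Complex.add_im]
    nlinarith [h2]
  rw [cross_eq] at h3
  have h4 : 0 < Real.sin ((a+b).arg - a.arg) := by
    by_contra hcon
    push_neg at hcon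
    have h5 : ‖a‖ * ‖a+b‖ * Real.sin ((a+b).arg - a.arg) ≤ 0 :=
      mul_nonpos_of_nonneg_of_nonpos (mul_pos habs habs').le hcon
    linarith
  by_contra hcon
  push_neg at hcon
  rcases hcon.lt_or_eq with hlt | heq
  · have hge : -Real.pi ≤ (a+b).arg - a.arg := by
      have := hab.1; have := ha.2; linarith
    have h6 : Real.sin ((a+b).arg - a.arg) ≤ 0 :=
      Real.sin_nonpos_of_nonpos_of_neg_pi_le (by linarith) hge
    linarith
  · rw [heq] at h4; simp at h4

lemma arg_exp_Ioc {θ : ℝ} (hθ : θ ∈ Set.Ioc (-Real.pi) Real.pi) :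
    (Complex.exp ((θ:ℂ) * I)).arg = θ := by
  rw [Complex.exp_mul_I]
  exact Complex.arg_cos_add_sin_mul_I hθ

lemma arg_m_exp {m φ : ℝ} (hm : 0 < m) (h0 : 0 < φ) (h1 : φ ≤ 1) :
    ((m:ℂ) * Complex.exp (((Real.pi * φ : ℝ) : ℂ) * I)).arg = Real.pi * φ := by
  rw [Complex.arg_real_mul _ hm, arg_exp_Ioc]
  constructor
  · nlinarith [Real.pi_pos]
  · nlinarith [Real.pi_pos]

end ArgLemmas

section CatLemmas

variable {C : Type u} [Category.{v} C] [Abelian C] {Z : C → ℂ}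

lemma shortExact_of_mono' {X Y : C} (f : X ⟶ Y) [Mono f] :
    (ShortComplex.mk f (cokernel.π f) (cokernel.condition f)).ShortExact := by
  apply ShortComplex.ShortExact.mk'
  · exact ShortComplex.exact_of_g_is_cokernel _ (cokernelIsCokernel f)
  · dsimp; infer_instance
  · dsimp; infer_instance

lemma Z_add_of_mono (hZ : IsStabilityFunction C Z) {X Y : C} (f : X ⟶ Y) [Mono f] :
    Z Y = Z X + Z (cokernel f) :=
  hZ.2.1 _ (shortExact_of_mono' f)

lemma Z_sub (hZ : IsStabilityFunction C Z) {E : C} {P Q : Subobject E} (h : P ≤ Q) :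
    Z (cokernel (Subobject.ofLE P Q h)) = Z (Q : C) - Z (P : C) := by
  rw [Z_add_of_mono hZ (Subobject.ofLE P Q h)]; ring

lemma coker_nonzero {E : C} {P Q : Subobject E} (h : P ≤ Q)
    (hne : P ≠ Q) : ¬ IsZero (cokernel (Subobject.ofLE P Q h)) := by
  intro hzero
  have : Epi (Subobject.ofLE P Q h) := CategoryTheory.Preadditive.epi_of_isZero_cokernel _ hzero
  have : IsIso (Subobject.ofLE P Q h) := isIso_of_mono_of_epi _
  apply hne
  refine le_antisymm h (Subobject.le_of_comm (inv (Subobject.ofLE P Q h)) ?_)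
  rw [IsIso.inv_comp_eq, Subobject.ofLE_arrow]

lemma argOk_Z (hZ : IsStabilityFunction C Z) {X : C} (hX : ¬ IsZero X) : ArgOk (Z X) := by
  obtain ⟨m, φ, hm, h0, h1, hE⟩ := hZ.2.2 X hX
  rw [hE]
  have := arg_m_exp hm h0 h1
  constructor
  · rw [this]; nlinarith [Real.pi_pos]
  · rw [this]; nlinarith [Real.pi_pos]

lemma Z_diff_argOk (hZ : IsStabilityFunction C Z) {E : C} {P Q : Subobject E} (h : P < Q) :
    ArgOk (Z (Q : C) - Z (P : C)) := by
  rw [← Z_sub hZ h.le]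
  exact argOk_Z hZ (coker_nonzero h.le h.ne)

lemma eq_of_le_of_Z_eq (hZ : IsStabilityFunction C Z) {E : C} {P Q : Subobject E}
    (h : P ≤ Q) (hzz : Z (P : C) = Z (Q : C)) : P = Q := by
  by_contra hne
  have := (Z_diff_argOk hZ (lt_of_le_of_ne h hne)).ne_zero
  rw [hzz] at this
  simp at this

lemma class_step (hZ : IsStabilityFunction C Z) {E : C} {V W X : Subobject E}
    (hVX : V ≤ X) (hWX : W ≤ X) [Simple (cokernel (Subobject.ofLE W X hWX))] :
    Z ((V : C)) - Z (((V ⊓ W : Subobject E) : C)) = 0 ∨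
    Z ((V : C)) - Z (((V ⊓ W : Subobject E) : C)) = Z (cokernel (Subobject.ofLE W X hWX)) := by
  set f := Subobject.ofLE W X hWX with hf
  set g : ((V : C)) ⟶ cokernel f := Subobject.ofLE V X hVX ≫ cokernel.π f with hg
  by_cases hg0 : g = 0
  · left
    have hVW : V ≤ W := by
      refine Subobject.le_of_comm (Abelian.monoLift f (Subobject.ofLE V X hVX) hg0) ?_
      rw [← Subobject.ofLE_arrow hWX, ← Category.assoc, Abelian.monoLift_comp,
        Subobject.ofLE_arrow]
    rw [inf_eq_left.mpr hVW, sub_self]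
  · right
    have hUV : (V ⊓ W : Subobject E) ≤ V := inf_le_left
    have hUW : (V ⊓ W : Subobject E) ≤ W := inf_le_right
    have hcomp : Subobject.ofLE _ _ hUV ≫ g = 0 := by
      have h1 : Subobject.ofLE _ _ hUV ≫ Subobject.ofLE V X hVX
          = Subobject.ofLE _ _ hUW ≫ f := by
        rw [← cancel_mono X.arrow]
        simp only [Category.assoc, hf, Subobject.ofLE_arrow]
      rw [hg, ← Category.assoc, h1, Category.assoc, cokernel.condition, comp_zero]
    have hepi : Epi g := epi_of_nonzero_to_simple hg0
    have hlim : IsLimit (KernelFork.ofι (Subobject.ofLE _ _ hUV) hcomp) := by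
      refine KernelFork.IsLimit.ofι' _ _ (fun {Y} t ht => ?_)
      have ht' : (t ≫ Subobject.ofLE V X hVX) ≫ cokernel.π f = 0 := by
        rw [Category.assoc, ← hg, ht]
      set s := Abelian.monoLift f (t ≫ Subobject.ofLE V X hVX) ht' with hs
      have hWfac : W.Factors (t ≫ V.arrow) := by
        rw [Subobject.factors_iff]
        refine ⟨s, ?_⟩
        show s ≫ W.arrow = t ≫ V.arrow
        rw [← Subobject.ofLE_arrow hWX, ← hf, ← Category.assoc, hs, Abelian.monoLift_comp,
          Category.assoc, Subobject.ofLE_arrow]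
      have hVfac : V.Factors (t ≫ V.arrow) := by
        rw [Subobject.factors_iff]; exact ⟨t, rfl⟩
      have hfac : (V ⊓ W).Factors (t ≫ V.arrow) := (Subobject.inf_factors _).mpr ⟨hVfac, hWfac⟩
      refine ⟨Subobject.factorThru _ _ hfac, ?_⟩
      rw [← cancel_mono V.arrow, Category.assoc, Subobject.ofLE_arrow,
        Subobject.factorThru_arrow]
    have hses : (ShortComplex.mk (Subobject.ofLE _ _ hUV) g hcomp).ShortExact := by
      apply ShortComplex.ShortExact.mk'
      · exact ShortComplex.exact_of_f_is_kernel _ hlim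
      · dsimp; infer_instance
      · exact hepi
    have := hZ.2.1 _ hses
    dsimp at this
    rw [this]
    ring

lemma coker_subobject (hZ : IsStabilityFunction C Z) {E : C} {P Q : Subobject E} (h : P ≤ Q)
    (S : Subobject (cokernel (Subobject.ofLE P Q h))) (hS : ¬ IsZero ((S : C))) :
    ∃ R : Subobject E, P < R ∧ R ≤ Q ∧ Z ((S : C)) = Z ((R : C)) - Z ((P : C)) := by
  have hmono : Mono (pullback.snd S.arrow (cokernel.π (Subobject.ofLE P Q h)) ≫ Q.arrow) :=
    mono_comp _ _
  have hRQ : Subobject.mk (pullback.snd S.arrow (cokernel.π (Subobject.ofLE P Q h)) ≫ Q.arrow)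
      ≤ Q := by
    have h1 : Subobject.mk (pullback.snd S.arrow (cokernel.π (Subobject.ofLE P Q h)) ≫ Q.arrow)
        ≤ Subobject.mk Q.arrow :=
      Subobject.mk_le_mk_of_comm (pullback.snd S.arrow (cokernel.π (Subobject.ofLE P Q h))) rfl
    rwa [Subobject.mk_arrow] at h1
  have hcond : (0 : ((P : C)) ⟶ ((S : C))) ≫ S.arrow
      = Subobject.ofLE P Q h ≫ cokernel.π (Subobject.ofLE P Q h) := by
    rw [zero_comp, cokernel.condition]
  have hPR : P ≤ Subobject.mk
      (pullback.snd S.arrow (cokernel.π (Subobject.ofLE P Q h)) ≫ Q.arrow) := by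
    have h1 : Subobject.mk P.arrow ≤ Subobject.mk
        (pullback.snd S.arrow (cokernel.π (Subobject.ofLE P Q h)) ≫ Q.arrow) := by
      refine Subobject.mk_le_mk_of_comm (pullback.lift 0 (Subobject.ofLE P Q h) hcond) ?_
      rw [← Category.assoc, pullback.lift_snd, Subobject.ofLE_arrow]
    rwa [Subobject.mk_arrow] at h1
  have hw : pullback.lift 0 (Subobject.ofLE P Q h) hcond
      ≫ pullback.fst S.arrow (cokernel.π (Subobject.ofLE P Q h)) = 0 := pullback.lift_fst _ _ _
  have hmonoα : Mono (pullback.lift 0 (Subobject.ofLE P Q h) hcond) := by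
    have h1 : Mono (pullback.lift 0 (Subobject.ofLE P Q h) hcond
        ≫ pullback.snd S.arrow (cokernel.π (Subobject.ofLE P Q h))) := by
      rw [pullback.lift_snd]; infer_instance
    exact mono_of_mono (pullback.lift 0 (Subobject.ofLE P Q h) hcond)
      (pullback.snd S.arrow (cokernel.π (Subobject.ofLE P Q h)))
  have hlim : IsLimit (KernelFork.ofι (pullback.lift 0 (Subobject.ofLE P Q h) hcond) hw) := by
    refine KernelFork.IsLimit.ofι' _ _ (fun {Y} t ht => ?_)
    have ht' : (t ≫ pullback.snd S.arrow (cokernel.π (Subobject.ofLE P Q h)))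
        ≫ cokernel.π (Subobject.ofLE P Q h) = 0 := by
      rw [Category.assoc, ← pullback.condition, ← Category.assoc, ht, zero_comp]
    refine ⟨Abelian.monoLift (Subobject.ofLE P Q h)
      (t ≫ pullback.snd S.arrow (cokernel.π (Subobject.ofLE P Q h))) ht', ?_⟩
    apply pullback.hom_ext
    · rw [Category.assoc, hw, comp_zero, ht]
    · rw [Category.assoc, pullback.lift_snd, Abelian.monoLift_comp]
  have hses : (ShortComplex.mk (pullback.lift 0 (Subobject.ofLE P Q h) hcond)
      (pullback.fst S.arrow (cokernel.π (Subobject.ofLE P Q h))) hw).ShortExact := by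
    apply ShortComplex.ShortExact.mk'
    · exact ShortComplex.exact_of_f_is_kernel _ hlim
    · exact hmonoα
    · infer_instance
  have hadd := hZ.2.1 _ hses
  dsimp at hadd
  have hiso : Z ((Subobject.mk
        (pullback.snd S.arrow (cokernel.π (Subobject.ofLE P Q h)) ≫ Q.arrow) : C))
      = Z (pullback S.arrow (cokernel.π (Subobject.ofLE P Q h))) :=
    hZ.1 (Subobject.underlyingIso _)
  have hZS : Z ((S : C)) = Z ((Subobject.mk
      (pullback.snd S.arrow (cokernel.π (Subobject.ofLE P Q h)) ≫ Q.arrow) : C))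
      - Z ((P : C)) := by
    rw [hiso, hadd]; ring
  refine ⟨_, lt_of_le_of_ne hPR ?_, hRQ, hZS⟩
  intro heq
  have h2 := (argOk_Z hZ hS).ne_zero
  rw [hZS, ← heq, sub_self] at h2
  exact h2 rfl


section Lattice

variable {C : Type u} [Category.{v} C] [Abelian C] {Z : C → ℂ} {E : C} {n : ℕ}

open scoped Classical in
/-- The set of indices where the chain `P ⊓ c j` jumps. -/
noncomputable def jumpSet (c : Fin (n+1) → Subobject E) (P : Subobject E) : Finset (Fin n) :=
  Finset.univ.filter (fun j => P ⊓ c j.castSucc ≠ P ⊓ c j.succ)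

lemma jump_diff (hZ : IsStabilityFunction C Z) (c : Fin (n+1) → Subobject E)
    (hle : ∀ j : Fin n, c j.castSucc ≤ c j.succ)
    (hsimple : ∀ j : Fin n, Simple (cokernel (Subobject.ofLE _ _ (hle j))))
    (P : Subobject E) (j : Fin n) :
    Z ((P ⊓ c j.succ : Subobject E) : C) - Z ((P ⊓ c j.castSucc : Subobject E) : C)
      = if j ∈ jumpSet c P then
          Z ((c j.succ : Subobject E) : C) - Z ((c j.castSucc : Subobject E) : C) else 0 := by
  have hinf : (P ⊓ c j.succ) ⊓ c j.castSucc = P ⊓ c j.castSucc := by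
    rw [inf_assoc, inf_eq_right.mpr (hle j)]
  by_cases hjump : j ∈ jumpSet c P
  · rw [if_pos hjump]
    haveI := hsimple j
    have hclass := class_step (V := P ⊓ c j.succ) (W := c j.castSucc) (X := c j.succ) hZ
      inf_le_right (hle j)
    rw [hinf] at hclass
    have hne : P ⊓ c j.castSucc ≠ P ⊓ c j.succ := by
      simpa [jumpSet] using hjump
    have hlt : P ⊓ c j.castSucc < P ⊓ c j.succ := by
      refine lt_of_le_of_ne (le_inf inf_le_left ((inf_le_right).trans (hle j))) hne
    have hne0 : Z ((P ⊓ c j.succ : Subobject E) : C)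
        - Z ((P ⊓ c j.castSucc : Subobject E) : C) ≠ 0 := by
      intro h0
      exact (Z_diff_argOk hZ hlt).ne_zero (by rw [sub_eq_zero] at h0; rw [h0, sub_self])
    rcases hclass with h | h
    · exact absurd h hne0
    · rw [h, Z_sub hZ (hle j)]
  · rw [if_neg hjump]
    have heq : P ⊓ c j.castSucc = P ⊓ c j.succ := by
      by_contra hne
      exact hjump (by simpa [jumpSet] using hne)
    rw [← heq, sub_self]

lemma zeta_formula (hZ : IsStabilityFunction C Z) (c : Fin (n+1) → Subobject E)
    (hc0 : c 0 = ⊥) (hclast : c (Fin.last n) = ⊤)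
    (hle : ∀ j : Fin n, c j.castSucc ≤ c j.succ)
    (hsimple : ∀ j : Fin n, Simple (cokernel (Subobject.ofLE _ _ (hle j))))
    (P : Subobject E) :
    Z ((P : C)) = Z (((⊥ : Subobject E) : C))
      + ∑ j ∈ jumpSet c P, (Z ((c j.succ : Subobject E) : C)
          - Z ((c j.castSucc : Subobject E) : C)) := by
  classical
  have key : ∑ j : Fin n, (Z ((P ⊓ c j.succ : Subobject E) : C)
      - Z ((P ⊓ c j.castSucc : Subobject E) : C))
      = Z ((P : C)) - Z (((⊥ : Subobject E) : C)) := by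
    set f : ℕ → ℂ := fun k => Z ((P ⊓ c ⟨min k n, by omega⟩ : Subobject E) : C) with hfdef
    have h1 : ∀ j : Fin n, Z ((P ⊓ c j.succ : Subobject E) : C)
        - Z ((P ⊓ c j.castSucc : Subobject E) : C) = f (j.val + 1) - f j.val := by
      intro j
      have e1 : c j.succ = c ⟨min (j.val+1) n, by omega⟩ := by
        congr 1; ext; simp [Nat.min_eq_left (Nat.succ_le_of_lt j.isLt)]
      have e2 : c j.castSucc = c ⟨min j.val n, by omega⟩ := by
        congr 1; ext; simp [Nat.min_eq_left (le_of_lt j.isLt)]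
      rw [hfdef]; dsimp only; rw [← e1, ← e2]
    calc ∑ j : Fin n, (Z ((P ⊓ c j.succ : Subobject E) : C)
        - Z ((P ⊓ c j.castSucc : Subobject E) : C))
        = ∑ j : Fin n, (f (j.val + 1) - f j.val) := by
          exact Finset.sum_congr rfl (fun j _ => h1 j)
      _ = ∑ i ∈ Finset.range n, (f (i + 1) - f i) := by
          exact Fin.sum_univ_eq_sum_range (fun i => f (i + 1) - f i) n
      _ = f n - f 0 := Finset.sum_range_sub f n
      _ = Z ((P : C)) - Z (((⊥ : Subobject E) : C)) := by
          rw [hfdef]; dsimp only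
          congr 2
          · have : (⟨min n n, by omega⟩ : Fin (n+1)) = Fin.last n := by ext; simp
            rw [this, hclast, inf_top_eq]
          · have : (⟨min 0 n, by omega⟩ : Fin (n+1)) = 0 := by ext; simp
            rw [this, hc0, inf_bot_eq]
  have key2 : ∑ j : Fin n, (Z ((P ⊓ c j.succ : Subobject E) : C)
      - Z ((P ⊓ c j.castSucc : Subobject E) : C))
      = ∑ j ∈ jumpSet c P, (Z ((c j.succ : Subobject E) : C)
          - Z ((c j.castSucc : Subobject E) : C)) := by
    rw [Finset.sum_congr rfl (fun j _ => jump_diff hZ c hle hsimple P j)]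
    rw [Finset.sum_ite_mem, Finset.univ_inter]
  rw [← key2, key]; ring

lemma jump_mono (c : Fin (n+1) → Subobject E)
    (hle : ∀ j : Fin n, c j.castSucc ≤ c j.succ) {P Q : Subobject E} (hPQ : P ≤ Q) :
    jumpSet c P ⊆ jumpSet c Q := by
  intro j hj
  simp only [jumpSet, Finset.mem_filter, Finset.mem_univ, true_and] at hj ⊢
  intro hQ
  apply hj
  refine le_antisymm (le_inf inf_le_left ((inf_le_right).trans (hle j))) ?_
  have h1 : P ⊓ c j.succ ≤ Q ⊓ c j.castSucc := by
    rw [hQ]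
    exact le_inf ((inf_le_left).trans hPQ) inf_le_right
  exact le_inf inf_le_left (h1.trans inf_le_right)

lemma jump_ssubset (hZ : IsStabilityFunction C Z) (c : Fin (n+1) → Subobject E)
    (hc0 : c 0 = ⊥) (hclast : c (Fin.last n) = ⊤)
    (hle : ∀ j : Fin n, c j.castSucc ≤ c j.succ)
    (hsimple : ∀ j : Fin n, Simple (cokernel (Subobject.ofLE _ _ (hle j))))
    {P Q : Subobject E} (hPQ : P < Q) : jumpSet c P ⊂ jumpSet c Q := by
  refine (Finset.ssubset_iff_of_subset (jump_mono c hle hPQ.le)).mpr ?_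
  by_contra hcon
  push_neg at hcon
  have heq : jumpSet c P = jumpSet c Q :=
    Finset.Subset.antisymm (jump_mono c hle hPQ.le) (fun x hx => hcon x hx)
  have hzeq : Z ((P : C)) = Z ((Q : C)) := by
    rw [zeta_formula hZ c hc0 hclast hle hsimple P,
      zeta_formula hZ c hc0 hclast hle hsimple Q, heq]
  exact (Z_diff_argOk hZ hPQ).ne_zero (by rw [hzeq, sub_self])

lemma wf_gt (hZ : IsStabilityFunction C Z) (c : Fin (n+1) → Subobject E)
    (hc0 : c 0 = ⊥) (hclast : c (Fin.last n) = ⊤)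
    (hle : ∀ j : Fin n, c j.castSucc ≤ c j.succ)
    (hsimple : ∀ j : Fin n, Simple (cokernel (Subobject.ofLE _ _ (hle j)))) :
    WellFounded ((· > ·) : Subobject E → Subobject E → Prop) := by
  have hsub : Subrelation ((· > ·) : Subobject E → Subobject E → Prop)
      (InvImage (· < ·) (fun P => n - (jumpSet c P).card)) := by
    intro Q P hQP
    have h1 : (jumpSet c P).card < (jumpSet c Q).card :=
      Finset.card_lt_card (jump_ssubset hZ c hc0 hclast hle hsimple hQP)
    have h2 : (jumpSet c Q).card ≤ n := by
      simpa using Finset.card_le_card (Finset.subset_univ (jumpSet c Q))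
    exact Nat.sub_lt_sub_left (lt_of_lt_of_le h1 h2) h1
  exact Subrelation.wf hsub (InvImage.wf _ Nat.lt_wfRel.wf)

lemma phase_finite (hZ : IsStabilityFunction C Z) (c : Fin (n+1) → Subobject E)
    (hc0 : c 0 = ⊥) (hclast : c (Fin.last n) = ⊤)
    (hle : ∀ j : Fin n, c j.castSucc ≤ c j.succ)
    (hsimple : ∀ j : Fin n, Simple (cokernel (Subobject.ofLE _ _ (hle j))))
    (P : Subobject E) :
    {x : ℝ | ∃ R : Subobject E, P < R ∧ x = (Z ((R : C)) - Z ((P : C))).arg}.Finite := by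
  classical
  set F : Finset ℝ := Finset.image (fun T : Finset (Fin n) =>
    ((Z (((⊥ : Subobject E) : C)) + ∑ j ∈ T, (Z ((c j.succ : Subobject E) : C)
        - Z ((c j.castSucc : Subobject E) : C))) - Z ((P : C))).arg) Finset.univ.powerset with hF
  apply Set.Finite.subset F.finite_toSet
  rintro x ⟨R, hR, rfl⟩
  rw [hF]
  simp only [Finset.coe_image, Set.mem_image, Finset.mem_coe, Finset.mem_powerset]
  exact ⟨jumpSet c R, Finset.subset_univ _, by
    rw [← zeta_formula hZ c hc0 hclast hle hsimple R]⟩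

lemma hn_chain (hZ : IsStabilityFunction C Z)
    (hwf : WellFounded ((· > ·) : Subobject E → Subobject E → Prop))
    (hfin : ∀ P : Subobject E,
      {x : ℝ | ∃ R : Subobject E, P < R ∧ x = (Z ((R : C)) - Z ((P : C))).arg}.Finite) :
    ∀ P : Subobject E, P ≠ ⊤ →
    ∃ (k : ℕ) (d : Fin (k+1) → Subobject E), d 0 = P ∧ d (Fin.last k) = ⊤ ∧
      (∀ j : Fin k, d j.castSucc < d j.succ) ∧
      (∀ j : Fin k, ∀ R : Subobject E, d j.castSucc < R → R ≤ d j.succ →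
        (Z ((R : C)) - Z ((d j.castSucc : Subobject E) : C)).arg
          ≤ (Z ((d j.succ : Subobject E) : C) - Z ((d j.castSucc : Subobject E) : C)).arg) ∧
      (∀ i j : Fin k, i < j →
        (Z ((d j.succ : Subobject E) : C) - Z ((d j.castSucc : Subobject E) : C)).arg
          < (Z ((d i.succ : Subobject E) : C) - Z ((d i.castSucc : Subobject E) : C)).arg) := by
  intro P₀
  refine hwf.induction (C := fun P => P ≠ ⊤ →
    ∃ (k : ℕ) (d : Fin (k+1) → Subobject E), d 0 = P ∧ d (Fin.last k) = ⊤ ∧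
      (∀ j : Fin k, d j.castSucc < d j.succ) ∧
      (∀ j : Fin k, ∀ R : Subobject E, d j.castSucc < R → R ≤ d j.succ →
        (Z ((R : C)) - Z ((d j.castSucc : Subobject E) : C)).arg
          ≤ (Z ((d j.succ : Subobject E) : C) - Z ((d j.castSucc : Subobject E) : C)).arg) ∧
      (∀ i j : Fin k, i < j →
        (Z ((d j.succ : Subobject E) : C) - Z ((d j.castSucc : Subobject E) : C)).arg
          < (Z ((d i.succ : Subobject E) : C) - Z ((d i.castSucc : Subobject E) : C)).arg))
    P₀ ?_
  clear P₀
  intro P IH hPtop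
  have hPlt : P < ⊤ := lt_top_iff_ne_top.mpr hPtop
  set Φ : Set ℝ := {x : ℝ | ∃ R : Subobject E, P < R ∧ x = (Z ((R : C)) - Z ((P : C))).arg}
    with hΦ
  have hΦne : Φ.Nonempty := ⟨_, ⟨⊤, hPlt, rfl⟩⟩
  obtain ⟨μ, hμΦ, hμmax'⟩ := Set.Finite.exists_maximalFor id Φ (hfin P) hΦne
  have hμmax : ∀ x ∈ Φ, x ≤ μ := by
    intro x hx
    by_contra hlt
    push_neg at hlt
    exact absurd (hμmax' hx hlt.le) (not_le.mpr hlt)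
  set M : Set (Subobject E) := {R | P < R ∧ (Z ((R : C)) - Z ((P : C))).arg = μ} with hM
  have hMne : M.Nonempty := by
    obtain ⟨R, hR, hRa⟩ := hμΦ
    exact ⟨R, hR, hRa.symm⟩
  obtain ⟨B, hBM, hBmax⟩ := hwf.has_min M hMne
  by_cases hcase : μ ≤ (Z (((⊤ : Subobject E) : C)) - Z ((P : C))).arg
  · -- single-step (semistable) case
    refine ⟨1, fun i => if i = 0 then P else ⊤, if_pos rfl, if_neg (by decide), ?_, ?_, ?_⟩
    · intro j
      have hj : j = 0 := Subsingleton.elim j 0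
      subst hj
      dsimp only
      rw [if_pos (show ((0:Fin 1).castSucc) = 0 by decide),
        if_neg (show ¬ ((0:Fin 1).succ) = 0 by decide)]
      exact hPlt
    · intro j R h1 h2
      have hj : j = 0 := Subsingleton.elim j 0
      subst hj
      dsimp only at h1 h2 ⊢
      rw [if_pos (show ((0:Fin 1).castSucc) = 0 by decide)] at h1 ⊢
      rw [if_neg (show ¬ ((0:Fin 1).succ) = 0 by decide)]
      exact le_trans (hμmax _ ⟨R, h1, rfl⟩) hcase
    · intro i j hij
      exact absurd hij (by omega)
  · push_neg at hcase
    have hBtop : B ≠ ⊤ := by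
      intro h
      rw [h] at hBM
      exact absurd hBM.2 (ne_of_lt hcase)
    have hPB : P < B := hBM.1
    have hBarg : (Z ((B : Subobject E) : C) - Z ((P : C))).arg = μ := hBM.2
    obtain ⟨k, d', h0, hlast, hstrict, hsemi, hpair⟩ := IH B hPB hBtop
    -- every step of `d'` has phase < μ
    have hkey : ∀ j : Fin k,
        (Z ((d' j.succ : Subobject E) : C) - Z ((d' j.castSucc : Subobject E) : C)).arg < μ := by
      intro j
      have hk : 0 < k := j.pos
      set j0 : Fin k := ⟨0, hk⟩ with hj0
      have hd'0 : d' j0.castSucc = B := by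
        have e : j0.castSucc = 0 := by ext; simp [hj0]
        rw [e, h0]
      have hstep0 :
          (Z ((d' j0.succ : Subobject E) : C) - Z ((d' j0.castSucc : Subobject E) : C)).arg
            < μ := by
        by_contra hcon
        push_neg at hcon
        have hx : ArgOk (Z ((B : Subobject E) : C) - Z ((P : C))) := Z_diff_argOk hZ hPB
        have hBlt : B < d' j0.succ := by
          have := hstrict j0
          rwa [hd'0] at this
        have hy : ArgOk (Z ((d' j0.succ : Subobject E) : C) - Z ((B : Subobject E) : C)) := by
          exact Z_diff_argOk hZ hBlt
        have hsum : (Z ((B : Subobject E) : C) - Z ((P : C)))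
            + (Z ((d' j0.succ : Subobject E) : C) - Z ((B : Subobject E) : C))
            = Z ((d' j0.succ : Subobject E) : C) - Z ((P : C)) := by ring
        have hPlt' : P < d' j0.succ := hPB.trans hBlt
        have hmem : (Z ((d' j0.succ : Subobject E) : C) - Z ((P : C))).arg ∈ Φ :=
          ⟨d' j0.succ, hPlt', rfl⟩
        rw [hd'0] at hcon
        rcases (le_iff_lt_or_eq.mp hcon) with hlt | heq
        · -- arg x = μ < arg y : sum has arg > μ, contradiction with maximality
          have h4 : (Z ((B : Subobject E) : C) - Z ((P : C))).arg
              < (Z ((d' j0.succ : Subobject E) : C) - Z ((B : Subobject E) : C)).arg := by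
            rw [hBarg]; exact hlt
          have h5 := arg_add_lt_of_arg_lt hx hy h4
          rw [hsum, hBarg] at h5
          exact absurd (hμmax _ hmem) (not_le.mpr h5)
        · -- equality : sum realizes μ at an object strictly above B
          have h4 : (Z ((B : Subobject E) : C) - Z ((P : C))).arg
              = (Z ((d' j0.succ : Subobject E) : C) - Z ((B : Subobject E) : C)).arg := by
            rw [hBarg]; exact heq
          have h5 := arg_add_eq_of_arg_eq hx hy h4
          rw [hsum, hBarg] at h5
          exact hBmax (d' j0.succ) ⟨hPlt', h5⟩ hBlt
      rcases eq_or_ne j j0 with rfl | hne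
      · exact hstep0
      · have hj0j : j0 < j := by
          rw [Fin.lt_def]
          exact Nat.pos_of_ne_zero (fun h => hne (by ext; simp [hj0, h]))
        exact lt_trans (hpair j0 j hj0j) hstep0
    refine ⟨k+1, Fin.cons P d', Fin.cons_zero _ _, ?_, ?_, ?_, ?_⟩
    · rw [← Fin.succ_last, Fin.cons_succ, hlast]
    · intro j
      induction j using Fin.cases with
      | zero =>
        simp only [Fin.castSucc_zero, Fin.cons_zero, Fin.cons_succ]
        rw [h0]
        exact hPB
      | succ i =>
        simp only [← Fin.succ_castSucc, Fin.cons_succ]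
        exact hstrict i
    · intro j R h1 h2
      induction j using Fin.cases with
      | zero =>
        simp only [Fin.castSucc_zero, Fin.cons_zero, Fin.cons_succ] at h1 h2 ⊢
        rw [h0] at h2 ⊢
        rw [hBarg]
        exact hμmax _ ⟨R, h1, rfl⟩
      | succ i =>
        simp only [← Fin.succ_castSucc, Fin.cons_succ] at h1 h2 ⊢
        exact hsemi i R h1 h2
    · intro i j hij
      induction i using Fin.cases with
      | zero =>
        induction j using Fin.cases with
        | zero => exact absurd hij (lt_irrefl _)
        | succ j' =>
          simp only [Fin.castSucc_zero, Fin.cons_zero, Fin.cons_succ, ← Fin.succ_castSucc]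
          rw [h0, hBarg]
          exact hkey j'
      | succ i' =>
        induction j using Fin.cases with
        | zero => exact absurd hij (by rw [Fin.lt_def]; simp)
        | succ j' =>
          simp only [← Fin.succ_castSucc, Fin.cons_succ]
          exact hpair i' j' (by rwa [Fin.succ_lt_succ_iff] at hij)

end Lattice

end CatLemmas

/-- on an abelian category of finite length, every stability function has
the Harder–Narasimhan property. -/
theorem statement10 (hfl : FiniteLengthCategory A) (Z : A → ℂ)
    (hZ : IsStabilityFunction A Z) :
    ∀ E : A, ¬ IsZero E → HasHNFiltration A Z E := by
  intro E hE
  obtain ⟨n, c, hc0, hclast, hle, hstep⟩ := hfl E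
  have hsimple : ∀ j : Fin n, Simple (cokernel (Subobject.ofLE _ _ (hle j))) :=
    fun j => (hstep j).2
  have hwf := wf_gt hZ c hc0 hclast hle hsimple
  have hfin := phase_finite hZ c hc0 hclast hle hsimple
  have hbotne : (⊥ : Subobject E) ≠ ⊤ := by
    intro h
    apply hE
    have hz : IsZero (((⊥ : Subobject E) : A)) :=
      IsZero.of_iso (isZero_zero A) Subobject.botCoeIsoZero
    rw [h] at hz
    exact IsZero.of_iso hz (asIso (⊤ : Subobject E).arrow).symm
  obtain ⟨k, d, h0, hlastd, hstrict, hsemi, hpair⟩ := hn_chain hZ hwf hfin ⊥ hbotne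
  refine ⟨k, d, h0, hlastd, fun j => (hstrict j).le, ?_, ?_⟩
  · intro j
    constructor
    · exact coker_nonzero _ (hstrict j).ne
    · intro S hS
      obtain ⟨R, hPR, hRQ, hZS⟩ := coker_subobject hZ ((hstrict j).le) S hS
      unfold phaseOf
      rw [hZS, Z_sub hZ]
      exact (div_le_div_iff_of_pos_right Real.pi_pos).mpr (hsemi j R hPR hRQ)
  · intro i j hij
    unfold phaseOf
    rw [Z_sub hZ, Z_sub hZ]
    exact (div_lt_div_iff_of_pos_right Real.pi_pos).mpr (hpair i j hij)
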